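/- Let Δ be a simplicial complex on [n], let 𝒞 be an ordered proper vertex k-colouring of Δ, and let R = K[x_1,…,x_k,y_1,…,y_k]. Let φ be the R-linear map from the free R-module with basis {ε_σ : σ ∈ Δ} to R sending ε_σ to the uniform monomial m_σ. If the index vector poset P(Δ, 𝒞) is a meet-semilattice, then the kernel of φ is generated by the binomial syzygies s_{σ,τ} = ε_σ · ∏_{i=1}^k y_i^{e_i(τ) − e_i(σ)} − ε_τ · ∏_{i=1}^k x_i^{e_i(τ) − e_i(σ)} taken over the covering relations e(σ) < e(τ) of P(Δ, 𝒞). -/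
import Mathlib


open MvPolynomial

/-- A simplicial complex on a vertex type `V`: a collection of finite subsets (faces)
containing the empty set and closed under taking subsets. -/
structure SimpComplex (V : Type) where
  faces : Set (Finset V)
  empty_mem : ∅ ∈ faces
  down_closed : ∀ {σ τ : Finset V}, σ ∈ faces → τ ⊆ σ → τ ∈ faces

namespace SimpComplex

variable {V : Type}

/-- `A` is an independent set of `Δ`: no two distinct members lie in a common face. -/
def IsIndep (Δ : SimpComplex V) (A : Set V) : Prop :=
  ∀ u ∈ A, ∀ v ∈ A, u ≠ v → ∀ σ ∈ Δ.faces, ¬(u ∈ σ ∧ v ∈ σ)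

/-- The link of a vertex `v` in `Δ`. -/
def link [DecidableEq V] (Δ : SimpComplex V) (v : V) : Set (Finset V) :=
  {τ | τ ∈ Δ.faces ∧ v ∉ τ ∧ insert v τ ∈ Δ.faces}

end SimpComplex

/-- A family of finsets indexed by `Fin k` is a partition of the vertex set. -/
def IsPartition {V : Type} {k : ℕ} (C : Fin k → Finset V) : Prop :=
  ∀ v : V, ∃! i, v ∈ C i

/-- A proper vertex `k`-colouring of a simplicial complex: a partition into independent sets. -/
def IsProperColouring {V : Type} {k : ℕ} (Δ : SimpComplex V) (C : Fin k → Finset V) : Prop :=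
  IsPartition C ∧ ∀ i, Δ.IsIndep (C i : Set V)

/-- An ordered proper vertex `k`-colouring, given by a duplicate-free list (recording the
linear order) for each colour class; the classes partition the vertices and are independent. -/
def IsOrderedColouring {V : Type} {k : ℕ} (Δ : SimpComplex V) (C : Fin k → List V) : Prop :=
  (∀ i, (C i).Nodup) ∧ (∀ v : V, ∃! i, v ∈ C i) ∧ (∀ i, Δ.IsIndep {v | v ∈ C i})

/-- The given linear orders on the colour classes are nesting orders: within a class,
if `v` comes before `u` then `link(u) ⊆ link(v)`.  (Thus the colouring is nested and is
endowed with the nesting order.) -/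
def IsNestingOrdered {V : Type} [DecidableEq V] {k : ℕ} (Δ : SimpComplex V)
    (C : Fin k → List V) : Prop :=
  ∀ i, (C i).Pairwise (fun v u => Δ.link u ⊆ Δ.link v)

/-- The index vector of a set `σ` with respect to the ordered colouring `C`:
`eVec C σ i = j` iff the (unique) element of `σ ∩ C i` is the `j`-th element of the list
`C i` (counting from 1), and `0` if `σ ∩ C i = ∅`. -/
def eVec {V : Type} [DecidableEq V] {k : ℕ} (C : Fin k → List V) (σ : Finset V)
    (i : Fin k) : ℕ :=
  if (C i).any (fun v => decide (v ∈ σ)) then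
    (C i).findIdx (fun v => decide (v ∈ σ)) + 1
  else 0

/-- The uniform monomial of a face `σ`:  `∏ i, x_i ^ (#C_i - e_i(σ)) * y_i ^ (e_i(σ))`,
where `x_i = X (Sum.inl i)` and `y_i = X (Sum.inr i)`. -/
noncomputable def uniformMonomial (K : Type) [Field K] {V : Type} [DecidableEq V] {k : ℕ}
    (C : Fin k → List V) (σ : Finset V) : MvPolynomial (Fin k ⊕ Fin k) K :=
  ∏ i : Fin k, (X (Sum.inl i) ^ ((C i).length - eVec C σ i) * X (Sum.inr i) ^ eVec C σ i)

/-- The uniform face ideal of `Δ` with respect to the ordered colouring `C`. -/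
noncomputable def uniformFaceIdeal (K : Type) [Field K] {V : Type} [DecidableEq V] {k : ℕ}
    (Δ : SimpComplex V) (C : Fin k → List V) : Ideal (MvPolynomial (Fin k ⊕ Fin k) K) :=
  Ideal.span {m | ∃ σ ∈ Δ.faces, m = uniformMonomial K C σ}

/-- The index vector poset `P(Δ,𝒞)` of a complex with respect to an ordered colouring:
the set of index vectors of faces, as a subset of `ℕ^k` with the componentwise order. -/
def indexSet {V : Type} [DecidableEq V] {k : ℕ} (Δ : SimpComplex V)
    (C : Fin k → List V) : Set (Fin k → ℕ) :=
  {e | ∃ σ ∈ Δ.faces, e = fun i => eVec C σ i}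

/-- A subset of `ℕ^k` is an order ideal for the componentwise partial order. -/
def IsOrderIdealNk {k : ℕ} (S : Set (Fin k → ℕ)) : Prop :=
  ∀ b ∈ S, ∀ a : Fin k → ℕ, a ≤ b → a ∈ S

/-- `a` is covered by `b` in the subposet `P ⊆ ℕ^k`: `a < b` and no element of `P` lies
strictly between them. -/
def CoversIn {k : ℕ} (P : Set (Fin k → ℕ)) (a b : Fin k → ℕ) : Prop :=
  a ∈ P ∧ b ∈ P ∧ a < b ∧ ¬ ∃ c ∈ P, a < c ∧ c < b

/-- `P ⊆ ℕ^k` is a meet-semilattice: every pair of its elements has a greatest lower bound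
within `P`. -/
def IsMeetSemilatticeIn {k : ℕ} (P : Set (Fin k → ℕ)) : Prop :=
  ∀ a ∈ P, ∀ b ∈ P, ∃ m ∈ P, m ≤ a ∧ m ≤ b ∧ ∀ d ∈ P, d ≤ a → d ≤ b → d ≤ m


section Stmt12Aux

variable {V : Type} [DecidableEq V] {k : ℕ}

lemma findIdx_congr {α : Type*} {p q : α → Bool} :
    ∀ l : List α, (∀ x ∈ l, p x = q x) → l.findIdx p = l.findIdx q
  | [], _ => rfl
  | a :: l, h => by
    rw [List.findIdx_cons, List.findIdx_cons, h a (.head _),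
      findIdx_congr l (fun x hx => h x (.tail _ hx))]

lemma any_congr {α : Type*} {p q : α → Bool} {l : List α} (h : ∀ x ∈ l, p x = q x) :
    l.any p = l.any q := by
  induction l with
  | nil => rfl
  | cons a l ih =>
    rw [List.any_cons, List.any_cons, h a (.head _), ih (fun x hx => h x (.tail _ hx))]

variable (C : Fin k → List V)

lemma eVec_le_length (σ : Finset V) (i : Fin k) : eVec C σ i ≤ (C i).length := by
  unfold eVec
  split
  · rename_i h
    exact Nat.succ_le_of_lt (List.findIdx_lt_length_of_exists (by simpa using h))
  · exact Nat.zero_le _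

lemma eVec_zero {σ : Finset V} {i : Fin k} (h : eVec C σ i = 0) : ∀ v ∈ C i, v ∉ σ := by
  unfold eVec at h
  split at h
  · simp at h
  · rename_i hany
    intro v hv hvσ
    exact hany (by simp only [List.any_eq_true]; exact ⟨v, hv, by simpa using hvσ⟩)

lemma eVec_ne_zero {σ : Finset V} {i : Fin k} {v : V} (hv : v ∈ C i) (hvσ : v ∈ σ) :
    eVec C σ i ≠ 0 := fun h => eVec_zero C h v hv hvσ

lemma eVec_spec {σ : Finset V} {i : Fin k} (h : eVec C σ i ≠ 0) :
    ∃ j : ℕ, ∃ hj : j < (C i).length, eVec C σ i = j + 1 ∧ (C i)[j] ∈ σ := by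
  have hany : (C i).any (fun v => decide (v ∈ σ)) = true := by
    by_contra hc
    exact h (by unfold eVec; rw [if_neg hc])
  have hlt : (C i).findIdx (fun v => decide (v ∈ σ)) < (C i).length :=
    List.findIdx_lt_length_of_exists (by simpa using hany)
  refine ⟨_, hlt, ?_, ?_⟩
  · unfold eVec; rw [if_pos hany]
  · simpa using List.findIdx_getElem (p := fun v => decide (v ∈ σ)) (xs := C i) (w := hlt)

variable {n : ℕ} (Δ : SimpComplex V) {C} (hC : IsOrderedColouring Δ C)

include hC

lemma unique_in_class {σ : Finset V} (hσ : σ ∈ Δ.faces) {i : Fin k} {u v : V}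
    (hu : u ∈ C i) (hv : v ∈ C i) (huσ : u ∈ σ) (hvσ : v ∈ σ) : u = v := by
  by_contra hne
  exact hC.2.2 i u hu v hv hne σ hσ ⟨huσ, hvσ⟩

lemma subset_of_eVec_eq {σ τ : Finset V} (hσ : σ ∈ Δ.faces) (hτ : τ ∈ Δ.faces)
    (h : ∀ i, eVec C σ i = eVec C τ i) : σ ⊆ τ := by
  intro v hvσ
  obtain ⟨i, hvi, -⟩ := hC.2.1 v
  have hne : eVec C σ i ≠ 0 := eVec_ne_zero C hvi hvσ
  obtain ⟨j, hj, hval, hmem⟩ := eVec_spec C hne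
  have hvj : (C i)[j] = v :=
    unique_in_class Δ hC hσ (List.getElem_mem hj) hvi hmem hvσ
  have hne' : eVec C τ i ≠ 0 := by rw [← h i]; exact hne
  obtain ⟨j', hj', hval', hmem'⟩ := eVec_spec C hne'
  have : j = j' := by
    have h2 := hval'
    rw [← h i, hval] at h2
    omega
  subst this
  rwa [hvj] at hmem'

lemma eVec_injective {σ τ : Finset V} (hσ : σ ∈ Δ.faces) (hτ : τ ∈ Δ.faces)
    (h : ∀ i, eVec C σ i = eVec C τ i) : σ = τ :=
  le_antisymm (subset_of_eVec_eq Δ hC hσ hτ h)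
    (subset_of_eVec_eq Δ hC hτ hσ (fun i => (h i).symm))

lemma eVec_filter (σ : Finset V) (i i' : Fin k) :
    eVec C (σ.filter (fun v => v ∈ C i)) i' = if i' = i then eVec C σ i else 0 := by
  by_cases hii : i' = i
  · subst hii
    rw [if_pos rfl]
    have hcong : ∀ v ∈ C i', (fun v => decide (v ∈ σ.filter (fun v => v ∈ C i'))) v
        = (fun v => decide (v ∈ σ)) v := by
      intro v hv
      simp only [decide_eq_decide, Finset.mem_filter]
      exact ⟨fun h => h.1, fun h => ⟨h, hv⟩⟩
    unfold eVec
    rw [any_congr hcong, findIdx_congr _ hcong]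
  · rw [if_neg hii]
    unfold eVec
    rw [if_neg]
    intro hany
    rw [List.any_eq_true] at hany
    obtain ⟨v, hv, hvmem⟩ := hany
    have hvf : v ∈ σ.filter (fun v => v ∈ C i) := by simpa using hvmem
    have hvi : v ∈ C i := (Finset.mem_filter.mp hvf).2
    obtain ⟨i0, hi0, huniq⟩ := hC.2.1 v
    exact hii ((huniq i' hv).trans (huniq i hvi).symm)

lemma singleCoord_mem {σ : Finset V} (hσ : σ ∈ Δ.faces) (i : Fin k) :
    (fun i' => if i' = i then eVec C σ i else 0) ∈ indexSet Δ C := by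
  refine ⟨σ.filter (fun v => v ∈ C i), Δ.down_closed hσ (Finset.filter_subset _ _), ?_⟩
  funext i'
  rw [eVec_filter Δ hC]

lemma min_mem (hmeet : IsMeetSemilatticeIn (indexSet Δ C)) {σ τ : Finset V}
    (hσ : σ ∈ Δ.faces) (hτ : τ ∈ Δ.faces) :
    (fun i => min (eVec C σ i) (eVec C τ i)) ∈ indexSet Δ C := by
  obtain ⟨m, hm, hmσ, hmτ, hglb⟩ := hmeet _ ⟨σ, hσ, rfl⟩ _ ⟨τ, hτ, rfl⟩
  have hme : m = fun i => min (eVec C σ i) (eVec C τ i) := by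
    apply le_antisymm
    · intro i
      exact le_min (hmσ i) (hmτ i)
    · intro i
      have h1 : (fun i' => if i' = i then min (eVec C σ i) (eVec C τ i) else 0)
          ∈ indexSet Δ C := by
        rcases le_total (eVec C σ i) (eVec C τ i) with h | h
        · simpa [min_eq_left h] using singleCoord_mem Δ hC hσ i
        · simpa [min_eq_right h] using singleCoord_mem Δ hC hτ i
      have h2 := hglb _ h1 (fun i' => by dsimp; split <;> simp_all [min_le_left])
        (fun i' => by dsimp; split <;> simp_all [min_le_right])
      simpa using h2 i
  rwa [hme] at hm


end Stmt12Aux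

section Stmt12Mon

variable {k : ℕ}

/-- Pack a pair of exponent vectors into a `Finsupp` on `Fin k ⊕ Fin k`. -/
noncomputable def svec (a b : Fin k → ℕ) : (Fin k ⊕ Fin k) →₀ ℕ :=
  Finsupp.equivFunOnFinite.symm (Sum.elim a b)

@[simp] lemma svec_inl (a b : Fin k → ℕ) (i : Fin k) : svec a b (Sum.inl i) = a i := rfl

@[simp] lemma svec_inr (a b : Fin k → ℕ) (i : Fin k) : svec a b (Sum.inr i) = b i := rfl

lemma svec_add (a b a' b' : Fin k → ℕ) :
    svec a b + svec a' b' = svec (a + a') (b + b') := by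
  ext s
  cases s <;> simp

lemma svec_congr {a b a' b' : Fin k → ℕ} (ha : ∀ i, a i = a' i) (hb : ∀ i, b i = b' i) :
    svec a b = svec a' b' := by
  ext s
  cases s <;> simp [ha, hb]

lemma prodXY {K : Type} [Field K] (a b : Fin k → ℕ) :
    (∏ i : Fin k, (X (Sum.inl i) : MvPolynomial (Fin k ⊕ Fin k) K) ^ a i
        * X (Sum.inr i) ^ b i) = monomial (svec a b) 1 := by
  have h1 : (∏ i : Fin k, (X (Sum.inl i) : MvPolynomial (Fin k ⊕ Fin k) K) ^ a i
        * X (Sum.inr i) ^ b i)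
      = ∏ s : Fin k ⊕ Fin k, (X s : MvPolynomial (Fin k ⊕ Fin k) K) ^ Sum.elim a b s := by
    rw [Fintype.prod_sum_type, ← Finset.prod_mul_distrib]
    rfl
  have h3 : ∏ s : Fin k ⊕ Fin k, (X s : MvPolynomial (Fin k ⊕ Fin k) K) ^ Sum.elim a b s
      = ∏ s : Fin k ⊕ Fin k, (X s : MvPolynomial (Fin k ⊕ Fin k) K) ^ (svec a b) s := rfl
  rw [h1, h3, ← prod_X_pow_eq_monomial (s := svec a b)]
  refine (Finset.prod_subset (Finset.subset_univ _) ?_).symm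
  intro s _ hs
  rw [Finsupp.notMem_support_iff.mp hs, pow_zero]

lemma prodY {K : Type} [Field K] (b : Fin k → ℕ) :
    (∏ i : Fin k, (X (Sum.inr i) : MvPolynomial (Fin k ⊕ Fin k) K) ^ b i)
      = monomial (svec 0 b) 1 := by
  rw [← prodXY 0 b]
  simp

lemma prodX {K : Type} [Field K] (a : Fin k → ℕ) :
    (∏ i : Fin k, (X (Sum.inl i) : MvPolynomial (Fin k ⊕ Fin k) K) ^ a i)
      = monomial (svec a 0) 1 := by
  rw [← prodXY a 0]
  simp

lemma uniformMonomial_eq {V : Type} [DecidableEq V] {K : Type} [Field K]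
    (C : Fin k → List V) (σ : Finset V) :
    uniformMonomial K C σ
      = monomial (svec (fun i => (C i).length - eVec C σ i) (fun i => eVec C σ i)) 1 := by
  rw [uniformMonomial, ← prodXY]

end Stmt12Mon


section Stmt12Main

open Finsupp

variable {n k : ℕ} (K : Type) [Field K] (Δ : SimpComplex (Fin n)) (C : Fin k → List (Fin n))

/-- The set of binomial syzygies attached to covering relations. -/
def syzSet : Set (↥Δ.faces →₀ MvPolynomial (Fin k ⊕ Fin k) K) :=
  {s : ↥Δ.faces →₀ MvPolynomial (Fin k ⊕ Fin k) K |
    ∃ σ τ : ↥Δ.faces,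
      CoversIn (indexSet Δ C) (fun i => eVec C σ.1 i) (fun i => eVec C τ.1 i) ∧
      s = Finsupp.single σ
          (∏ i : Fin k, X (Sum.inr i) ^ (eVec C τ.1 i - eVec C σ.1 i))
        - Finsupp.single τ
          (∏ i : Fin k, X (Sum.inl i) ^ (eVec C τ.1 i - eVec C σ.1 i))}

lemma rBin_mem (hC : IsOrderedColouring Δ C) (N : ℕ) :
    ∀ σ τ : ↥Δ.faces, (∀ i, eVec C σ.1 i ≤ eVec C τ.1 i) →
      (∑ i, (eVec C τ.1 i - eVec C σ.1 i)) ≤ N →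
      Finsupp.single σ
          (monomial (svec 0 (fun i => eVec C τ.1 i - eVec C σ.1 i)) (1 : K))
        - Finsupp.single τ
          (monomial (svec (fun i => eVec C τ.1 i - eVec C σ.1 i) 0) (1 : K))
        ∈ Submodule.span (MvPolynomial (Fin k ⊕ Fin k) K) (syzSet K Δ C) := by
  have base : ∀ σ τ : ↥Δ.faces, (∀ i, eVec C σ.1 i = eVec C τ.1 i) →
      Finsupp.single σ
          (monomial (svec 0 (fun i => eVec C τ.1 i - eVec C σ.1 i)) (1 : K))
        - Finsupp.single τ
          (monomial (svec (fun i => eVec C τ.1 i - eVec C σ.1 i) 0) (1 : K))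
        ∈ Submodule.span (MvPolynomial (Fin k ⊕ Fin k) K) (syzSet K Δ C) := by
    intro σ τ heq
    have hστ : σ = τ := Subtype.ext (eVec_injective Δ hC σ.2 τ.2 heq)
    subst hστ
    have hd : (fun i => eVec C σ.1 i - eVec C σ.1 i) = (0 : Fin k → ℕ) := by
      funext i; simp
    rw [hd, sub_self]
    exact Submodule.zero_mem _
  induction N with
  | zero =>
    intro σ τ hle hsum
    refine base σ τ (fun i => ?_)
    have h1 : eVec C τ.1 i - eVec C σ.1 i = 0 := by
      by_contra hne
      have h2 : 1 ≤ eVec C τ.1 i - eVec C σ.1 i := Nat.one_le_iff_ne_zero.mpr hne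
      have h3 : eVec C τ.1 i - eVec C σ.1 i ≤ ∑ j, (eVec C τ.1 j - eVec C σ.1 j) :=
        Finset.single_le_sum (f := fun j => eVec C τ.1 j - eVec C σ.1 j)
          (fun j _ => Nat.zero_le _) (Finset.mem_univ i)
      omega
    have := hle i
    omega
  | succ N ih =>
    intro σ τ hle hsum
    by_cases heq : ∀ i, eVec C σ.1 i = eVec C τ.1 i
    · exact base σ τ heq
    · have hlt : (fun i => eVec C σ.1 i) < (fun i => eVec C τ.1 i) := by
        refine lt_of_le_of_ne (fun i => hle i) (fun h => heq (fun i => congrFun h i))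
      by_cases hcov : CoversIn (indexSet Δ C) (fun i => eVec C σ.1 i) (fun i => eVec C τ.1 i)
      · refine Submodule.subset_span ⟨σ, τ, hcov, ?_⟩
        rw [prodY, prodX]
      · have hmid : ∃ c ∈ indexSet Δ C, (fun i => eVec C σ.1 i) < c
            ∧ c < (fun i => eVec C τ.1 i) := by
          by_contra hmid
          exact hcov ⟨⟨σ.1, σ.2, rfl⟩, ⟨τ.1, τ.2, rfl⟩, hlt, hmid⟩
        obtain ⟨c, ⟨μ0, hμ0, hc⟩, hc1, hc2⟩ := hmid
        subst hc
        set μ : ↥Δ.faces := ⟨μ0, hμ0⟩ with hμ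
        have hle1 : ∀ i, eVec C σ.1 i ≤ eVec C μ.1 i := fun i => (le_of_lt hc1) i
        have hle2 : ∀ i, eVec C μ.1 i ≤ eVec C τ.1 i := fun i => (le_of_lt hc2) i
        have hstrict1 : ∃ i, eVec C σ.1 i < eVec C μ.1 i := by
          by_contra hno
          push_neg at hno
          exact (ne_of_lt hc1) (funext (fun i => le_antisymm (hle1 i) (hno i)))
        have hstrict2 : ∃ i, eVec C μ.1 i < eVec C τ.1 i := by
          by_contra hno
          push_neg at hno
          exact (ne_of_lt hc2) (funext (fun i => le_antisymm (hle2 i) (hno i)))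
        obtain ⟨i1, hi1⟩ := hstrict1
        obtain ⟨i2, hi2⟩ := hstrict2
        have hsplit : ∑ i, (eVec C τ.1 i - eVec C σ.1 i)
            = ∑ i, ((eVec C τ.1 i - eVec C μ.1 i) + (eVec C μ.1 i - eVec C σ.1 i)) := by
          refine Finset.sum_congr rfl (fun i _ => ?_)
          have := hle1 i; have := hle2 i
          omega
        rw [Finset.sum_add_distrib] at hsplit
        have hb1 : 1 ≤ ∑ i, (eVec C τ.1 i - eVec C μ.1 i) := by
          have h3 : eVec C τ.1 i2 - eVec C μ.1 i2 ≤ ∑ j, (eVec C τ.1 j - eVec C μ.1 j) :=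
            Finset.single_le_sum (f := fun j => eVec C τ.1 j - eVec C μ.1 j)
              (fun j _ => Nat.zero_le _) (Finset.mem_univ i2)
          have := hi2
          omega
        have hb2 : 1 ≤ ∑ i, (eVec C μ.1 i - eVec C σ.1 i) := by
          have h3 : eVec C μ.1 i1 - eVec C σ.1 i1 ≤ ∑ j, (eVec C μ.1 j - eVec C σ.1 j) :=
            Finset.single_le_sum (f := fun j => eVec C μ.1 j - eVec C σ.1 j)
              (fun j _ => Nat.zero_le _) (Finset.mem_univ i1)
          have := hi1
          omega
        clear_value μ
        have hm1 := ih σ μ hle1 (by omega)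
        have hm2 := ih μ τ hle2 (by omega)
        have key : Finsupp.single σ
              (monomial (svec 0 (fun i => eVec C τ.1 i - eVec C σ.1 i)) (1 : K))
            - Finsupp.single τ
              (monomial (svec (fun i => eVec C τ.1 i - eVec C σ.1 i) 0) (1 : K))
            = monomial (svec 0 (fun i => eVec C τ.1 i - eVec C μ.1 i)) (1 : K)
                • (Finsupp.single σ
                    (monomial (svec 0 (fun i => eVec C μ.1 i - eVec C σ.1 i)) (1 : K))
                  - Finsupp.single μ
                    (monomial (svec (fun i => eVec C μ.1 i - eVec C σ.1 i) 0) (1 : K)))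
              + monomial (svec (fun i => eVec C μ.1 i - eVec C σ.1 i) 0) (1 : K)
                • (Finsupp.single μ
                    (monomial (svec 0 (fun i => eVec C τ.1 i - eVec C μ.1 i)) (1 : K))
                  - Finsupp.single τ
                    (monomial (svec (fun i => eVec C τ.1 i - eVec C μ.1 i) 0) (1 : K))) := by
          simp only [smul_sub, Finsupp.smul_single, smul_eq_mul, monomial_mul, one_mul,
            mul_one, svec_add]
          have e1 : svec ((0 : Fin k → ℕ) + 0)
                ((fun i => eVec C τ.1 i - eVec C μ.1 i)
                  + (fun i => eVec C μ.1 i - eVec C σ.1 i))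
              = svec 0 (fun i => eVec C τ.1 i - eVec C σ.1 i) := by
            refine svec_congr (fun i => by simp) (fun i => ?_)
            simp only [Pi.add_apply]
            have := hle1 i; have := hle2 i
            omega
          have e2 : svec ((0 : Fin k → ℕ) + (fun i => eVec C μ.1 i - eVec C σ.1 i))
                ((fun i => eVec C τ.1 i - eVec C μ.1 i) + 0)
              = svec (fun i => eVec C μ.1 i - eVec C σ.1 i)
                  (fun i => eVec C τ.1 i - eVec C μ.1 i) := by
            refine svec_congr (fun i => by simp) (fun i => by simp)
          have e3 : svec ((fun i => eVec C μ.1 i - eVec C σ.1 i) + (0 : Fin k → ℕ))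
                ((0 : Fin k → ℕ) + (fun i => eVec C τ.1 i - eVec C μ.1 i))
              = svec (fun i => eVec C μ.1 i - eVec C σ.1 i)
                  (fun i => eVec C τ.1 i - eVec C μ.1 i) := by
            refine svec_congr (fun i => by simp) (fun i => by simp)
          have e4 : svec ((fun i => eVec C μ.1 i - eVec C σ.1 i)
                  + (fun i => eVec C τ.1 i - eVec C μ.1 i)) ((0 : Fin k → ℕ) + 0)
              = svec (fun i => eVec C τ.1 i - eVec C σ.1 i) 0 := by
            refine svec_congr (fun i => ?_) (fun i => by simp)
            simp only [Pi.add_apply]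
            have := hle1 i; have := hle2 i
            omega
          rw [e1, e2, e3, e4]
          abel
        rw [key]
        exact Submodule.add_mem _ (Submodule.smul_mem _ _ hm1) (Submodule.smul_mem _ _ hm2)


lemma genBin_mem (hC : IsOrderedColouring Δ C) (hmeet : IsMeetSemilatticeIn (indexSet Δ C))
    (σ τ : ↥Δ.faces) (u v : (Fin k ⊕ Fin k) →₀ ℕ)
    (huv : u + svec (fun i => (C i).length - eVec C σ.1 i) (fun i => eVec C σ.1 i)
         = v + svec (fun i => (C i).length - eVec C τ.1 i) (fun i => eVec C τ.1 i)) :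
    Finsupp.single σ (monomial u (1 : K)) - Finsupp.single τ (monomial v (1 : K))
      ∈ Submodule.span (MvPolynomial (Fin k ⊕ Fin k) K) (syzSet K Δ C) := by
  obtain ⟨ρ0, hρ0, hg⟩ := min_mem Δ hC hmeet σ.2 τ.2
  set ρ : ↥Δ.faces := ⟨ρ0, hρ0⟩ with hρ
  have hgi : ∀ i, eVec C ρ.1 i = min (eVec C σ.1 i) (eVec C τ.1 i) :=
    fun i => (congrFun hg i).symm
  clear_value ρ
  have hinl : ∀ i, u (Sum.inl i) + ((C i).length - eVec C σ.1 i)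
      = v (Sum.inl i) + ((C i).length - eVec C τ.1 i) := by
    intro i
    have h := DFunLike.congr_fun huv (Sum.inl i)
    simpa using h
  have hinr : ∀ i, u (Sum.inr i) + eVec C σ.1 i = v (Sum.inr i) + eVec C τ.1 i := by
    intro i
    have h := DFunLike.congr_fun huv (Sum.inr i)
    simpa using h
  have hes : ∀ i, eVec C σ.1 i ≤ (C i).length := fun i => eVec_le_length C σ.1 i
  have het : ∀ i, eVec C τ.1 i ≤ (C i).length := fun i => eVec_le_length C τ.1 i
  have hu_inl : ∀ i, eVec C σ.1 i - eVec C ρ.1 i ≤ u (Sum.inl i) := by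
    intro i
    have := hinl i; have := hes i; have := het i; have := hgi i
    omega
  have hv_inl : ∀ i, eVec C τ.1 i - eVec C ρ.1 i ≤ v (Sum.inl i) := by
    intro i
    have := hinl i; have := hes i; have := het i; have := hgi i
    omega
  set t1 : (Fin k ⊕ Fin k) →₀ ℕ :=
    svec (fun i => u (Sum.inl i) - (eVec C σ.1 i - eVec C ρ.1 i)) (fun i => u (Sum.inr i))
    with ht1
  set t2 : (Fin k ⊕ Fin k) →₀ ℕ :=
    svec (fun i => v (Sum.inl i) - (eVec C τ.1 i - eVec C ρ.1 i)) (fun i => v (Sum.inr i))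
    with ht2
  have c1 : t1 + svec (fun i => eVec C σ.1 i - eVec C ρ.1 i) 0 = u := by
    ext s
    cases s with
    | inl i =>
      simp only [ht1, Finsupp.add_apply, svec_inl]
      have := hu_inl i
      omega
    | inr i =>
      simp only [ht1, Finsupp.add_apply, svec_inr, Pi.zero_apply]
      omega
  have c2 : t2 + svec (fun i => eVec C τ.1 i - eVec C ρ.1 i) 0 = v := by
    ext s
    cases s with
    | inl i =>
      simp only [ht2, Finsupp.add_apply, svec_inl]
      have := hv_inl i
      omega
    | inr i =>
      simp only [ht2, Finsupp.add_apply, svec_inr, Pi.zero_apply]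
      omega
  have c3 : t1 + svec 0 (fun i => eVec C σ.1 i - eVec C ρ.1 i)
      = t2 + svec 0 (fun i => eVec C τ.1 i - eVec C ρ.1 i) := by
    ext s
    cases s with
    | inl i =>
      simp only [ht1, ht2, Finsupp.add_apply, svec_inl, Pi.zero_apply]
      have := hinl i; have := hes i; have := het i; have := hgi i
      omega
    | inr i =>
      simp only [ht1, ht2, Finsupp.add_apply, svec_inr]
      have := hinr i; have := hgi i
      omega
  have key : Finsupp.single σ (monomial u (1 : K)) - Finsupp.single τ (monomial v (1 : K))
      = monomial t2 (1 : K)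
          • (Finsupp.single ρ
              (monomial (svec 0 (fun i => eVec C τ.1 i - eVec C ρ.1 i)) (1 : K))
            - Finsupp.single τ
              (monomial (svec (fun i => eVec C τ.1 i - eVec C ρ.1 i) 0) (1 : K)))
        - monomial t1 (1 : K)
          • (Finsupp.single ρ
              (monomial (svec 0 (fun i => eVec C σ.1 i - eVec C ρ.1 i)) (1 : K))
            - Finsupp.single σ
              (monomial (svec (fun i => eVec C σ.1 i - eVec C ρ.1 i) 0) (1 : K))) := by
    simp only [smul_sub, Finsupp.smul_single, smul_eq_mul, monomial_mul, mul_one]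
    rw [c1, c2, ← c3]
    abel
  rw [key]
  have hb1 := rBin_mem K Δ C hC (∑ i, (eVec C τ.1 i - eVec C ρ.1 i)) ρ τ
    (fun i => by have := hgi i; omega) (le_refl _)
  have hb2 := rBin_mem K Δ C hC (∑ i, (eVec C σ.1 i - eVec C ρ.1 i)) ρ σ
    (fun i => by have := hgi i; omega) (le_refl _)
  exact Submodule.sub_mem _ (Submodule.smul_mem _ _ hb1) (Submodule.smul_mem _ _ hb2)

end Stmt12Main



/-- Corollary 6.5: let `φ` be the map from the free module with basis
`{ε_σ : σ ∈ Δ}` to `R` sending `ε_σ ↦ m_σ`.  If the index vector poset `P(Δ,𝒞)` is a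
meet-semilattice, then `ker φ` is generated by the binomial syzygies
`s_{σ,τ} = ε_σ·∏ y_i^{e_i(τ)-e_i(σ)} - ε_τ·∏ x_i^{e_i(τ)-e_i(σ)}` attached to the covering
relations `e(σ) < e(τ)` of `P(Δ,𝒞)`. -/
theorem stmt12 {n k : ℕ} (K : Type) [Field K] (Δ : SimpComplex (Fin n))
    (C : Fin k → List (Fin n)) (hC : IsOrderedColouring Δ C)
    (hmeet : IsMeetSemilatticeIn (indexSet Δ C)) :
    LinearMap.ker (Finsupp.linearCombination (MvPolynomial (Fin k ⊕ Fin k) K)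
        (fun σ : ↥Δ.faces => uniformMonomial K C σ.1)) =
      Submodule.span (MvPolynomial (Fin k ⊕ Fin k) K)
        {s : ↥Δ.faces →₀ MvPolynomial (Fin k ⊕ Fin k) K |
          ∃ σ τ : ↥Δ.faces,
            CoversIn (indexSet Δ C) (fun i => eVec C σ.1 i) (fun i => eVec C τ.1 i) ∧
            s = Finsupp.single σ
                (∏ i : Fin k, X (Sum.inr i) ^ (eVec C τ.1 i - eVec C σ.1 i))
              - Finsupp.single τ
                (∏ i : Fin k, X (Sum.inl i) ^ (eVec C τ.1 i - eVec C σ.1 i))} := by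
  classical
  show _ = Submodule.span (MvPolynomial (Fin k ⊕ Fin k) K) (syzSet K Δ C)
  apply le_antisymm
  · -- kernel ⊆ span of syzygies
    intro z hz
    rw [LinearMap.mem_ker] at hz
    set d : ↥Δ.faces → ((Fin k ⊕ Fin k) →₀ ℕ) := fun σ =>
      svec (fun i => (C i).length - eVec C σ.1 i) (fun i => eVec C σ.1 i) with hd
    set cc : ↥Δ.faces → ((Fin k ⊕ Fin k) →₀ ℕ) → K := fun σ α =>
      if d σ ≤ α then MvPolynomial.coeff (α - d σ) (z σ) else 0 with hcc
    have hmono : ∀ σ : ↥Δ.faces, uniformMonomial K C σ.1 = monomial (d σ) 1 := fun σ =>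
      uniformMonomial_eq C σ.1
    have hslice : ∀ α, (∑ σ ∈ z.support, cc σ α) = 0 := by
      intro α
      have h1 : ∀ σ ∈ z.support,
          MvPolynomial.coeff α (z σ • uniformMonomial K C σ.1) = cc σ α := by
        intro σ _
        rw [smul_eq_mul, hmono σ, coeff_mul_monomial']
        simp only [mul_one, hcc]
      calc ∑ σ ∈ z.support, cc σ α
          = MvPolynomial.coeff α (∑ σ ∈ z.support, z σ • uniformMonomial K C σ.1) := by
            rw [MvPolynomial.coeff_sum]
            exact (Finset.sum_congr rfl h1).symm
        _ = 0 := by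
            rw [show (∑ σ ∈ z.support, z σ • uniformMonomial K C σ.1)
                = (Finsupp.linearCombination (MvPolynomial (Fin k ⊕ Fin k) K)
                    (fun σ : ↥Δ.faces => uniformMonomial K C σ.1)) z from
                  (Finsupp.linearCombination_apply _ _).symm, hz, coeff_zero]
    have hdecomp : z = ∑ α ∈ z.support.biUnion (fun σ => (z σ).support.image (· + d σ)), ∑ σ ∈ z.support,
        Finsupp.single σ (monomial (α - d σ) (cc σ α)) := by
      rw [Finset.sum_comm]
      have hz' : z = ∑ σ ∈ z.support, Finsupp.single σ (z σ) := (Finsupp.sum_single z).symm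
      conv_lhs => rw [hz']
      refine Finset.sum_congr rfl (fun σ hσ => ?_)
      rw [← Finsupp.single_finset_sum]
      congr 1
      have himg : (z σ).support.image (· + d σ)
          ⊆ z.support.biUnion (fun σ => (z σ).support.image (· + d σ)) :=
        Finset.subset_biUnion_of_mem (u := fun σ => (z σ).support.image (· + d σ)) hσ
      have step1 : ∑ α ∈ z.support.biUnion (fun σ => (z σ).support.image (· + d σ)), monomial (α - d σ) (cc σ α)
          = ∑ α ∈ (z σ).support.image (· + d σ), monomial (α - d σ) (cc σ α) := by
        refine (Finset.sum_subset himg (fun α _ hαn => ?_)).symm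
        by_cases hle : d σ ≤ α
        · have hns : α - d σ ∉ (z σ).support := by
            intro hmem
            exact hαn (Finset.mem_image.mpr ⟨α - d σ, hmem, by
              show α - d σ + d σ = α
              rw [tsub_add_cancel_of_le hle]⟩)
          rw [hcc]
          simp only [if_pos hle]
          rw [MvPolynomial.notMem_support_iff.mp hns, monomial_zero]
        · rw [hcc]
          simp only [if_neg hle, monomial_zero]
      have step2 : ∑ α ∈ (z σ).support.image (· + d σ), monomial (α - d σ) (cc σ α)
          = ∑ β ∈ (z σ).support, monomial β (MvPolynomial.coeff β (z σ)) := by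
        rw [Finset.sum_image (fun a _ b _ h => add_right_cancel h)]
        refine Finset.sum_congr rfl (fun β _ => ?_)
        have h5 : d σ ≤ β + d σ := le_add_self
        rw [hcc]
        simp only [if_pos h5, add_tsub_cancel_right]
      rw [step1, step2, MvPolynomial.support_sum_monomial_coeff]
    rw [hdecomp]
    refine Submodule.sum_mem _ (fun α _ => ?_)
    by_cases hall : ∀ σ ∈ z.support, cc σ α = 0
    · have hzero : ∑ σ ∈ z.support, Finsupp.single σ (monomial (α - d σ) (cc σ α)) = 0 :=
        Finset.sum_eq_zero (fun σ hσ => by rw [hall σ hσ, monomial_zero, Finsupp.single_zero])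
      rw [hzero]
      exact Submodule.zero_mem _
    · push_neg at hall
      obtain ⟨τ0, hτ0s, hτ0⟩ := hall
      have hdτ0 : d τ0 ≤ α := by
        by_contra hle
        exact hτ0 (by rw [hcc]; simp only [if_neg hle])
      have hsum0 : (∑ σ ∈ z.support,
          (MvPolynomial.C (cc σ α) : MvPolynomial (Fin k ⊕ Fin k) K)) = 0 := by
        rw [← map_sum, hslice α, map_zero]
      have hrw : ∑ σ ∈ z.support,
            (MvPolynomial.C (cc σ α) : MvPolynomial (Fin k ⊕ Fin k) K) •
              (Finsupp.single σ (monomial (α - d σ) (1 : K))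
                - Finsupp.single τ0 (monomial (α - d τ0) (1 : K)))
          = ∑ σ ∈ z.support, Finsupp.single σ (monomial (α - d σ) (cc σ α)) := by
        simp only [smul_sub]
        rw [Finset.sum_sub_distrib, ← Finset.sum_smul, hsum0, zero_smul, sub_zero]
        refine Finset.sum_congr rfl (fun σ _ => ?_)
        rw [Finsupp.smul_single, smul_eq_mul, C_mul_monomial, mul_one]
      rw [← hrw]
      refine Submodule.sum_mem _ (fun σ hσ => ?_)
      by_cases hc0 : cc σ α = 0
      · rw [hc0, map_zero, zero_smul]
        exact Submodule.zero_mem _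
      · refine Submodule.smul_mem _ _ ?_
        have hdσ : d σ ≤ α := by
          by_contra h
          exact hc0 (by rw [hcc]; simp only [if_neg h])
        refine genBin_mem K Δ C hC hmeet σ τ0 (α - d σ) (α - d τ0) ?_
        show (α - d σ) + d σ = (α - d τ0) + d τ0
        rw [tsub_add_cancel_of_le hdσ, tsub_add_cancel_of_le hdτ0]
  · -- syzygies lie in the kernel
    rw [Submodule.span_le]
    rintro s ⟨σ, τ, hcov, rfl⟩
    simp only [SetLike.mem_coe, LinearMap.mem_ker, map_sub,
      Finsupp.linearCombination_single]
    rw [prodY, prodX, uniformMonomial_eq, uniformMonomial_eq, smul_eq_mul, smul_eq_mul,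
      monomial_mul, monomial_mul, one_mul]
    have hle : ∀ i, eVec C σ.1 i ≤ eVec C τ.1 i := fun i => (le_of_lt hcov.2.2.1) i
    have hlen : ∀ i, eVec C τ.1 i ≤ (C i).length := fun i => eVec_le_length C τ.1 i
    have hexp : svec 0 (fun i => eVec C τ.1 i - eVec C σ.1 i)
          + svec (fun i => (C i).length - eVec C σ.1 i) (fun i => eVec C σ.1 i)
        = svec (fun i => eVec C τ.1 i - eVec C σ.1 i) 0
          + svec (fun i => (C i).length - eVec C τ.1 i) (fun i => eVec C τ.1 i) := by
      rw [svec_add, svec_add]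
      refine svec_congr (fun i => ?_) (fun i => ?_) <;>
        simp only [Pi.add_apply, Pi.zero_apply] <;>
        (have := hle i; have := hlen i; omega)
    rw [hexp, sub_self]
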